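/- There exist a constant C > 0 and a deterministic one-bit-feedback context-free algorithm posting a single price per round such that for every horizon T ∈ ℕ and all s, b ∈ [0,1], the gain-from-trade regret satisfies ∑_{t=1}^T max(b − s, 0) − ∑_{t=1}^T (b − s)·1{s ≤ p_t ≤ b} ≤ C. (The dyadic-search algorithm achieves this.) -/

import Mathlib

open Finset

noncomputable section

/-- A deterministic one-bit-feedback context-free algorithm posting a single price per
round: from the history (price, trade bit), produce the next price. -/
abbrev AlgoCF := List (ℝ × Bool) → ℝ

/-- The history of the first `t` rounds. -/
def histCF (Alg : AlgoCF) (s b : ℝ) : ℕ → List (ℝ × Bool)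
  | 0 => []
  | t + 1 =>
    let h := histCF Alg s b t
    let p := Alg h
    h ++ [(p, decide (s ≤ p ∧ p ≤ b))]

/-- The price posted at round `t`. -/
def priceCF (Alg : AlgoCF) (s b : ℝ) (t : ℕ) : ℝ :=
  Alg (histCF Alg s b t)

def dyadic (n : ℕ) : ℝ :=
  (2 * ((n+1) - 2 ^ Nat.log2 (n+1)) + 1 : ℕ) / 2 ^ (Nat.log2 (n+1) + 1)
def myAlg : AlgoCF := fun h =>
  match h.find? (fun x => x.2) with
  | some x => x.1
  | none => dyadic h.length
lemma hist_allfalse (s b : ℝ) (t : ℕ)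
    (h : ∀ r < t, ¬(s ≤ dyadic r ∧ dyadic r ≤ b)) :
    histCF myAlg s b t = (List.range t).map (fun r => (dyadic r, false)) := by
  induction t with
  | zero => rfl
  | succ t ih =>
    have ih' := ih (fun r hr => h r (hr.trans (Nat.lt_succ_self t)))
    have hfind : ((List.range t).map (fun r => (dyadic r, false))).find?
        (fun x => x.2) = none := by
      simp [List.find?_eq_none]
    simp [histCF, ih', myAlg, hfind, List.range_succ, h t (Nat.lt_succ_self t)]

lemma find_true (s b : ℝ) (N : ℕ)
    (hmin : ∀ r < N, ¬(s ≤ dyadic r ∧ dyadic r ≤ b))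
    (hN : s ≤ dyadic N ∧ dyadic N ≤ b) :
    ∀ t, N < t → (histCF myAlg s b t).find? (fun x => x.2) = some (dyadic N, true) := by
  intro t ht
  induction t with
  | zero => omega
  | succ t ih =>
    rcases Nat.lt_succ_iff_lt_or_eq.mp ht with h' | h'
    · have := ih h'
      simp [histCF, List.find?_append, this]
    · subst h'
      have hall := hist_allfalse s b N hmin
      have hfind : ((List.range N).map (fun r => (dyadic r, false))).find?
          (fun x => x.2) = none := by
        simp [List.find?_eq_none]
      have hlen : ((List.range N).map (fun r => (dyadic r, false))).length = N := by
        simp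
      have hp : myAlg ((List.range N).map (fun r => (dyadic r, false))) = dyadic N := by
        simp only [myAlg, hfind, hlen]
      simp [histCF, List.find?_append, hall, hfind, hp, hN.1, hN.2]

lemma price_eq (s b : ℝ) (N : ℕ)
    (hmin : ∀ r < N, ¬(s ≤ dyadic r ∧ dyadic r ≤ b))
    (hN : s ≤ dyadic N ∧ dyadic N ≤ b) :
    ∀ t, N ≤ t → priceCF myAlg s b t = dyadic N := by
  intro t ht
  rcases eq_or_lt_of_le ht with h' | h'
  · have hall := hist_allfalse s b N hmin
    have hfind : ((List.range N).map (fun r => (dyadic r, false))).find?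
        (fun x => x.2) = none := by
      simp [List.find?_eq_none]
    rw [← h']
    simp only [priceCF, myAlg, hall, hfind]
    simp
  · have := find_true s b N hmin hN t h'
    simp [priceCF, myAlg, this]


lemma dyadic_stage (k i : ℕ) (hi : i < 2 ^ k) :
    dyadic (2 ^ k - 1 + i) = (2 * i + 1 : ℝ) / 2 ^ (k + 1) := by
  have h1 : 1 ≤ 2 ^ k := Nat.one_le_two_pow
  have hn : (2 ^ k - 1 + i) + 1 = 2 ^ k + i := by omega
  have hlog : Nat.log2 (2 ^ k + i) = k := by
    rw [Nat.log2_eq_log_two]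
    refine Nat.log_eq_of_pow_le_of_lt_pow (by omega) ?_
    have : 2 ^ (k + 1) = 2 ^ k + 2 ^ k := by ring
    omega
  rw [dyadic, hn, hlog]
  have : 2 ^ k + i - 2 ^ k = i := by omega
  rw [this]
  push_cast
  ring

lemma exists_good (s b : ℝ) (hs : 0 ≤ s) (hb : b ≤ 1) (hL : 0 < b - s) :
    ∃ n : ℕ, (s ≤ dyadic n ∧ dyadic n ≤ b) ∧ (n : ℝ) * (b - s) ≤ 4 := by
  set L := b - s with hLdef
  have hex : ∃ k : ℕ, 1 ≤ L * 2 ^ k := by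
    obtain ⟨k, hk⟩ := pow_unbounded_of_one_lt (1 / L) (by norm_num : (1:ℝ) < 2)
    exact ⟨k, by rw [div_lt_iff₀ hL] at hk; nlinarith⟩
  set k := Nat.find hex with hkdef
  have hk1 : 1 ≤ L * 2 ^ k := Nat.find_spec hex
  -- construct the odd multiple
  have hpow : (0:ℝ) < 2 ^ (k+1) := by positivity
  set m := ⌈s * 2 ^ (k+1)⌉₊ with hmdef
  have hm1 : s * 2 ^ (k+1) ≤ m := Nat.le_ceil _
  have hm2 : (m : ℝ) < s * 2 ^ (k+1) + 1 := by
    exact Nat.ceil_lt_add_one (by positivity)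
  set j := if m % 2 = 1 then m else m + 1 with hjdef
  have hjodd : j % 2 = 1 := by
    rcases Nat.even_or_odd m with h | h
    · have := Nat.even_iff.mp h
      simp only [hjdef]
      split <;> omega
    · simp [hjdef, Nat.odd_iff.mp h]
  have hjm : m ≤ j ∧ j ≤ m + 1 := by
    rcases Nat.even_or_odd m with h | h <;> simp [hjdef] <;> split <;> omega
  have hks : (1:ℝ)/2^k ≤ L := by
    rw [div_le_iff₀ (by positivity)]
    linarith [hk1]
  have hjs : s ≤ (j : ℝ) / 2 ^ (k+1) := by
    rw [le_div_iff₀ hpow]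
    calc s * 2^(k+1) ≤ (m:ℝ) := hm1
      _ ≤ j := by exact_mod_cast hjm.1
  have h2h : (2:ℝ)/2^(k+1) = 1/2^k := by
    rw [pow_succ]; field_simp
  have hjb : (j : ℝ) / 2 ^ (k+1) < b := by
    rw [div_lt_iff₀ hpow]
    have : (j:ℝ) ≤ m + 1 := by exact_mod_cast hjm.2
    have h2 : (1:ℝ)/2^k * 2^(k+1) = 2 := by
      rw [pow_succ]; field_simp
    nlinarith [hks, hm2]
  have hj1 : (j:ℝ)/2^(k+1) < 1 := lt_of_lt_of_le hjb hb
  have hjlt : j < 2 ^ (k+1) := by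
    by_contra h
    push_neg at h
    have : (2:ℝ)^(k+1) ≤ j := by exact_mod_cast h
    have := (div_lt_one hpow).mp hj1
    linarith
  set i := j / 2 with hidef
  have hji : j = 2 * i + 1 := by omega
  have hik : i < 2 ^ k := by
    have : 2 ^ (k+1) = 2 * 2 ^ k := by ring
    omega
  refine ⟨2 ^ k - 1 + i, ?_, ?_⟩
  · rw [dyadic_stage k i hik]
    have : ((2 * i + 1 : ℕ) : ℝ) = (j : ℝ) := Nat.cast_inj.mpr hji.symm
    constructor
    · refine le_trans hjs (le_of_eq ?_)
      push_cast [hji]; ring_nf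
    · refine le_trans (le_of_eq ?_) hjb.le
      push_cast [hji]; ring_nf
  · -- n * L ≤ 4
    rcases Nat.eq_zero_or_pos k with hk0 | hk0
    · have h2k : (2:ℕ) ^ k = 1 := by simp [hk0]
      have : 2 ^ k - 1 + i = 0 := by omega
      rw [this]
      norm_num
    · have hmin : ¬ (1 ≤ L * 2 ^ (k - 1)) := Nat.find_min hex (by omega)
      push_neg at hmin
      have hn : ((2 ^ k - 1 + i : ℕ) : ℝ) ≤ 2 ^ (k+1) := by
        have : (2 ^ k - 1 + i : ℕ) ≤ 2 ^ (k+1) := by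
          have : 2 ^ (k+1) = 2 * 2 ^ k := by ring
          omega
        exact_mod_cast this
      have h4 : (2:ℝ) ^ (k+1) * L ≤ 4 := by
        have heq : (2:ℝ) ^ (k+1) = 4 * 2 ^ (k-1) := by
          have h : k + 1 = (k - 1) + 2 := by omega
          rw [h, pow_add]; ring
        rw [heq]
        nlinarith [hmin]
      nlinarith [hn, hL.le, hpow]


/-- Context-free efficiency maximization with one-bit feedback: the dyadic-search
algorithm has gain-from-trade regret bounded by a constant, uniformly in the horizon `T`
and the valuations `s, b ∈ [0,1]`. -/
theorem exists_context_free_gft_algorithm :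
    ∃ C : ℝ, 0 < C ∧
      ∃ Alg : AlgoCF,
        ∀ (T : ℕ) (s b : ℝ), s ∈ Set.Icc (0:ℝ) 1 → b ∈ Set.Icc (0:ℝ) 1 →
          ∑ _t ∈ Finset.range T, max (b - s) 0 -
            ∑ t ∈ Finset.range T,
              (if s ≤ priceCF Alg s b t ∧ priceCF Alg s b t ≤ b then b - s else 0)
            ≤ C := by
  refine ⟨4, by norm_num, myAlg, ?_⟩
  intro T s b hs hb
  rcases le_or_gt b s with hbs | hbs
  · have h1 : max (b - s) 0 = 0 := max_eq_right (by linarith)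
    have h2 : ∀ t, (if s ≤ priceCF myAlg s b t ∧ priceCF myAlg s b t ≤ b
        then b - s else 0) = 0 := by
      intro t
      split
      · next h => linarith [h.1, h.2]
      · rfl
    simp only [h1, h2, Finset.sum_const, smul_zero, Finset.sum_const_zero]
    norm_num
  · obtain ⟨n0, hgood, hbound⟩ := exists_good s b hs.1 hb.2 (by linarith)
    have hexN : ∃ n, s ≤ dyadic n ∧ dyadic n ≤ b := ⟨n0, hgood⟩
    set N := Nat.find hexN with hNdef
    have hNspec := Nat.find_spec hexN
    have hmin : ∀ r < N, ¬(s ≤ dyadic r ∧ dyadic r ≤ b) := fun r hr => Nat.find_min hexN hr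
    have hprice := price_eq s b N hmin hNspec
    have hmaxeq : max (b - s) 0 = b - s := max_eq_left (by linarith)
    have hNn0 : N ≤ n0 := Nat.find_min' hexN hgood
    rw [← Finset.sum_sub_distrib]
    have hterm : ∀ t ∈ Finset.range T,
        max (b - s) 0 - (if s ≤ priceCF myAlg s b t ∧ priceCF myAlg s b t ≤ b
          then b - s else 0) ≤ (if t < N then b - s else 0) := by
      intro t _
      rcases lt_or_ge t N with ht | ht
      · rw [if_pos ht, hmaxeq]
        split
        · linarith
        · linarith
      · rw [if_neg (not_lt.mpr ht), hmaxeq, hprice t ht, if_pos hNspec]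
        linarith
    refine le_trans (Finset.sum_le_sum hterm) ?_
    rw [← Finset.sum_filter, Finset.sum_const]
    have hcard : ((Finset.range T).filter (fun t => t < N)).card ≤ N := by
      have hsub : (Finset.range T).filter (fun t => t < N) ⊆ Finset.range N := by
        intro x hx
        simp only [Finset.mem_filter, Finset.mem_range] at hx ⊢
        exact hx.2
      simpa using Finset.card_le_card hsub
    have : (((Finset.range T).filter (fun t => t < N)).card • (b - s) : ℝ)
        ≤ (N : ℝ) * (b - s) := by
      rw [nsmul_eq_mul]
      exact mul_le_mul_of_nonneg_right (by exact_mod_cast hcard) (by linarith)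
    refine le_trans this (le_trans ?_ hbound)
    exact mul_le_mul_of_nonneg_right (by exact_mod_cast hNn0) (by linarith)

end
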